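/- Let X, X′, Y, Y′ be random elements of a real separable Hilbert space H and let ε, δ be random variables taking the values 0 and 1 each with probability 1/2, all six objects mutually independent, with X′ distributed as X and Y′ distributed as Y. Define the real random variable S = δ‖X−Y‖ − (1−δ)(ε‖X−X′‖ + (1−ε)‖Y−Y′‖). If the distribution of S is symmetric around the origin (S and −S are identically distributed), then E exp(−‖X−Y‖²/2) = (1/2)·(E exp(−‖X−X′‖²/2) + E exp(−‖Y−Y′‖²/2)). -/

import Mathlib

open MeasureTheory ProbabilityTheory

noncomputable def gker : ℝ → ℝ := fun s => if s < 0 then 1 else Real.exp (-s^2/2)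

lemma gker_measurable : Measurable gker := by
  unfold gker
  exact Measurable.ite (measurableSet_lt measurable_id measurable_const)
    measurable_const (by fun_prop)

lemma gker_of_nonpos {s : ℝ} (h : s ≤ 0) : gker s = 1 := by
  rcases lt_or_eq_of_le h with h' | h'
  · simp [gker, h']
  · subst h'; simp [gker]

lemma gker_of_nonneg {s : ℝ} (h : 0 ≤ s) : gker s = Real.exp (-s^2/2) := by
  simp [gker, not_lt.2 h]

lemma exp_bound (s : ℝ) : |Real.exp (-s^2/2)| ≤ 1 := by
  rw [Real.abs_exp]
  exact Real.exp_le_one_iff.2 (by nlinarith [sq_nonneg s])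

lemma abs_mul_le_one {a b : ℝ} (ha : |a| ≤ 1) (hb : |b| ≤ 1) : |a * b| ≤ 1 := by
  rw [abs_mul]; nlinarith [abs_nonneg a, abs_nonneg b]

lemma mp_snd' {α β : Type*} [MeasurableSpace α] [MeasurableSpace β]
    (μa : Measure α) (μb : Measure β) [IsProbabilityMeasure μa] [SFinite μb] :
    MeasurePreserving Prod.snd (μa.prod μb) μb :=
  ⟨measurable_snd, by simp⟩

lemma map_pair_fst_eq {Ω α β : Type*} [MeasurableSpace Ω] [MeasurableSpace α] [MeasurableSpace β]
    {μ : Measure Ω} {f : Ω → α} {g : Ω → β} (hf : Measurable f) (hg : Measurable g)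
    {ρa : Measure α} {ρb : Measure β} [SFinite ρa] [IsProbabilityMeasure ρb]
    (h : μ.map (fun ω => (f ω, g ω)) = ρa.prod ρb) : μ.map f = ρa := by
  have hc : f = Prod.fst ∘ (fun ω => (f ω, g ω)) := rfl
  rw [hc, ← Measure.map_map measurable_fst (hf.prodMk hg), h]
  simp

lemma map_pair_snd_eq {Ω α β : Type*} [MeasurableSpace Ω] [MeasurableSpace α] [MeasurableSpace β]
    {μ : Measure Ω} {f : Ω → α} {g : Ω → β} (hf : Measurable f) (hg : Measurable g)
    {ρa : Measure α} {ρb : Measure β} [IsProbabilityMeasure ρa] [SFinite ρb]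
    (h : μ.map (fun ω => (f ω, g ω)) = ρa.prod ρb) : μ.map g = ρb := by
  have hc : g = Prod.snd ∘ (fun ω => (f ω, g ω)) := rfl
  rw [hc, ← Measure.map_map measurable_snd (hf.prodMk hg), h]
  simp

/-- If `S` is symmetrically distributed around the origin, then `E exp(−‖X−Y‖²/2) = (1/2)·(E exp(−‖X−X′‖²/2) + E exp(−‖Y−Y′‖²/2))`. -/
theorem S_symmetric_implies_gauss_kernel_eq
    {Ω : Type*} [MeasurableSpace Ω] (μ : Measure Ω) [IsProbabilityMeasure μ]
    {H : Type*} [NormedAddCommGroup H] [InnerProductSpace ℝ H] [CompleteSpace H]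
    [SecondCountableTopology H] [MeasurableSpace H] [BorelSpace H]
    (X X' Y Y' : Ω → H) (ε δ : Ω → ℝ)
    (hX : Measurable X) (hX' : Measurable X') (hY : Measurable Y) (hY' : Measurable Y')
    (hε : Measurable ε) (hδ : Measurable δ)
    (hεval : ∀ ω, ε ω = 0 ∨ ε ω = 1) (hδval : ∀ ω, δ ω = 0 ∨ δ ω = 1)
    (hε0 : μ {ω | ε ω = 0} = 1/2) (hε1 : μ {ω | ε ω = 1} = 1/2)
    (hδ0 : μ {ω | δ ω = 0} = 1/2) (hδ1 : μ {ω | δ ω = 1} = 1/2)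
    (hindep : μ.map (fun ω => (X ω, X' ω, Y ω, Y' ω, ε ω, δ ω)) =
      (μ.map X).prod ((μ.map X').prod ((μ.map Y).prod
        ((μ.map Y').prod ((μ.map ε).prod (μ.map δ))))))
    (hX'X : μ.map X' = μ.map X) (hY'Y : μ.map Y' = μ.map Y)
    (S : Ω → ℝ)
    (hS : S = fun ω => δ ω * ‖X ω - Y ω‖
      - (1 - δ ω) * (ε ω * ‖X ω - X' ω‖ + (1 - ε ω) * ‖Y ω - Y' ω‖))
    (hsym : μ.map S = μ.map (fun ω => -S ω)) :
    ∫ ω, Real.exp (-‖X ω - Y ω‖^2 / 2) ∂μ =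
      (1/2) * ((∫ ω, Real.exp (-‖X ω - X' ω‖^2 / 2) ∂μ)
        + ∫ ω, Real.exp (-‖Y ω - Y' ω‖^2 / 2) ∂μ) := by
  haveI iX : IsProbabilityMeasure (μ.map X) := Measure.isProbabilityMeasure_map hX.aemeasurable
  haveI iX' : IsProbabilityMeasure (μ.map X') := Measure.isProbabilityMeasure_map hX'.aemeasurable
  haveI iY : IsProbabilityMeasure (μ.map Y) := Measure.isProbabilityMeasure_map hY.aemeasurable
  haveI iY' : IsProbabilityMeasure (μ.map Y') := Measure.isProbabilityMeasure_map hY'.aemeasurable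
  haveI iε : IsProbabilityMeasure (μ.map ε) := Measure.isProbabilityMeasure_map hε.aemeasurable
  haveI iδ : IsProbabilityMeasure (μ.map δ) := Measure.isProbabilityMeasure_map hδ.aemeasurable
  have hT : Measurable (fun ω => (X ω, X' ω, Y ω, Y' ω, ε ω, δ ω)) := by fun_prop
  have hSm : Measurable S := by rw [hS]; fun_prop
  -- the symmetry identity, transported to Ω
  have hgint : ∫ ω, gker (S ω) ∂μ = ∫ ω, gker (-S ω) ∂μ := by
    have e1 : ∫ s, gker s ∂(μ.map S) = ∫ ω, gker (S ω) ∂μ :=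
      integral_map hSm.aemeasurable gker_measurable.aestronglyMeasurable
    have e2 : ∫ s, gker s ∂(μ.map (fun ω => -S ω)) = ∫ ω, gker (-S ω) ∂μ :=
      integral_map (hSm.neg.aemeasurable) gker_measurable.aestronglyMeasurable
    rw [← e1, ← e2, hsym]
  -- independence facts
  -- A : ((X,Y), δ)
  have a1 : MeasurePreserving (Prod.map (@id H) Prod.snd)
      ((μ.map X).prod ((μ.map X').prod ((μ.map Y).prod
        ((μ.map Y').prod ((μ.map ε).prod (μ.map δ))))))
      ((μ.map X).prod ((μ.map Y).prod ((μ.map Y').prod ((μ.map ε).prod (μ.map δ))))) :=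
    (MeasurePreserving.id _).prod (mp_snd' _ _)
  have a2 : MeasurePreserving (Prod.map (@id H) (Prod.map (@id H) (Prod.snd ∘ Prod.snd)))
      ((μ.map X).prod ((μ.map Y).prod ((μ.map Y').prod ((μ.map ε).prod (μ.map δ)))))
      ((μ.map X).prod ((μ.map Y).prod (μ.map δ))) :=
    (MeasurePreserving.id _).prod ((MeasurePreserving.id _).prod
      ((mp_snd' _ _).comp (mp_snd' _ _)))
  have a3 : MeasurePreserving (⇑(MeasurableEquiv.prodAssoc.symm))
      ((μ.map X).prod ((μ.map Y).prod (μ.map δ)))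
      (((μ.map X).prod (μ.map Y)).prod (μ.map δ)) :=
    (measurePreserving_prodAssoc _ _ _).symm MeasurableEquiv.prodAssoc
  have mpA := (a3.comp a2).comp a1
  have hA : μ.map (fun ω => ((X ω, Y ω), δ ω)) = ((μ.map X).prod (μ.map Y)).prod (μ.map δ) := by
    have hc : (fun ω => ((X ω, Y ω), δ ω)) =
        ((⇑(MeasurableEquiv.prodAssoc.symm) ∘
          Prod.map (@id H) (Prod.map (@id H) (Prod.snd ∘ Prod.snd))) ∘
          Prod.map (@id H) Prod.snd) ∘ (fun ω => (X ω, X' ω, Y ω, Y' ω, ε ω, δ ω)) := rfl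
    rw [hc, ← Measure.map_map mpA.measurable hT, hindep, mpA.map_eq]
  -- B : ((X,X'), (ε,δ))
  have b1 : MeasurePreserving (Prod.map (@id H) (Prod.map (@id H) Prod.snd))
      ((μ.map X).prod ((μ.map X').prod ((μ.map Y).prod
        ((μ.map Y').prod ((μ.map ε).prod (μ.map δ))))))
      ((μ.map X).prod ((μ.map X').prod ((μ.map Y').prod ((μ.map ε).prod (μ.map δ))))) :=
    (MeasurePreserving.id _).prod ((MeasurePreserving.id _).prod (mp_snd' _ _))
  have b2 : MeasurePreserving (Prod.map (@id H) (Prod.map (@id H) Prod.snd))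
      ((μ.map X).prod ((μ.map X').prod ((μ.map Y').prod ((μ.map ε).prod (μ.map δ)))))
      ((μ.map X).prod ((μ.map X').prod ((μ.map ε).prod (μ.map δ)))) :=
    (MeasurePreserving.id _).prod ((MeasurePreserving.id _).prod (mp_snd' _ _))
  have b3 : MeasurePreserving (⇑(MeasurableEquiv.prodAssoc.symm))
      ((μ.map X).prod ((μ.map X').prod ((μ.map ε).prod (μ.map δ))))
      (((μ.map X).prod (μ.map X')).prod ((μ.map ε).prod (μ.map δ))) :=
    (measurePreserving_prodAssoc _ _ _).symm MeasurableEquiv.prodAssoc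
  have mpB := (b3.comp b2).comp b1
  have hB : μ.map (fun ω => ((X ω, X' ω), (ε ω, δ ω)))
      = ((μ.map X).prod (μ.map X')).prod ((μ.map ε).prod (μ.map δ)) := by
    have hc : (fun ω => ((X ω, X' ω), (ε ω, δ ω))) =
        ((⇑(MeasurableEquiv.prodAssoc.symm) ∘
          Prod.map (@id H) (Prod.map (@id H) Prod.snd)) ∘
          Prod.map (@id H) (Prod.map (@id H) Prod.snd)) ∘
          (fun ω => (X ω, X' ω, Y ω, Y' ω, ε ω, δ ω)) := rfl
    rw [hc, ← Measure.map_map mpB.measurable hT, hindep, mpB.map_eq]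
  -- C : ((Y,Y'), (ε,δ))
  have c1 : MeasurePreserving (Prod.snd ∘ Prod.snd)
      ((μ.map X).prod ((μ.map X').prod ((μ.map Y).prod
        ((μ.map Y').prod ((μ.map ε).prod (μ.map δ))))))
      ((μ.map Y).prod ((μ.map Y').prod ((μ.map ε).prod (μ.map δ)))) :=
    (mp_snd' _ _).comp (mp_snd' _ _)
  have c3 : MeasurePreserving (⇑(MeasurableEquiv.prodAssoc.symm))
      ((μ.map Y).prod ((μ.map Y').prod ((μ.map ε).prod (μ.map δ))))
      (((μ.map Y).prod (μ.map Y')).prod ((μ.map ε).prod (μ.map δ))) :=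
    (measurePreserving_prodAssoc _ _ _).symm MeasurableEquiv.prodAssoc
  have mpC := c3.comp c1
  have hC : μ.map (fun ω => ((Y ω, Y' ω), (ε ω, δ ω)))
      = ((μ.map Y).prod (μ.map Y')).prod ((μ.map ε).prod (μ.map δ)) := by
    have hc : (fun ω => ((Y ω, Y' ω), (ε ω, δ ω))) =
        (⇑(MeasurableEquiv.prodAssoc.symm) ∘ (Prod.snd ∘ Prod.snd)) ∘
          (fun ω => (X ω, X' ω, Y ω, Y' ω, ε ω, δ ω)) := rfl
    rw [hc, ← Measure.map_map mpC.measurable hT, hindep, mpC.map_eq]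
  -- marginals
  have hXY : μ.map (fun ω => (X ω, Y ω)) = (μ.map X).prod (μ.map Y) :=
    map_pair_fst_eq (hX.prodMk hY) hδ hA
  have hXX : μ.map (fun ω => (X ω, X' ω)) = (μ.map X).prod (μ.map X') :=
    map_pair_fst_eq (hX.prodMk hX') (hε.prodMk hδ) hB
  have hYY : μ.map (fun ω => (Y ω, Y' ω)) = (μ.map Y).prod (μ.map Y') :=
    map_pair_fst_eq (hY.prodMk hY') (hε.prodMk hδ) hC
  have hεδm : μ.map (fun ω => (ε ω, δ ω)) = (μ.map ε).prod (μ.map δ) :=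
    map_pair_snd_eq (hX.prodMk hX') (hε.prodMk hδ) hB
  have indA : IndepFun (fun ω => (X ω, Y ω)) δ μ :=
    (indepFun_iff_map_prod_eq_prod_map_map ((hX.prodMk hY).aemeasurable) hδ.aemeasurable).2
      (by rw [hA, hXY])
  have indB : IndepFun (fun ω => (X ω, X' ω)) (fun ω => (ε ω, δ ω)) μ :=
    (indepFun_iff_map_prod_eq_prod_map_map ((hX.prodMk hX').aemeasurable)
      ((hε.prodMk hδ).aemeasurable)).2 (by rw [hB, hXX, hεδm])
  have indC : IndepFun (fun ω => (Y ω, Y' ω)) (fun ω => (ε ω, δ ω)) μ :=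
    (indepFun_iff_map_prod_eq_prod_map_map ((hY.prodMk hY').aemeasurable)
      ((hε.prodMk hδ).aemeasurable)).2 (by rw [hC, hYY, hεδm])
  have indD : IndepFun ε δ μ :=
    (indepFun_iff_map_prod_eq_prod_map_map hε.aemeasurable hδ.aemeasurable).2 (by rw [hεδm])
  -- measurability of building blocks
  have hset1 : MeasurableSet {ω | δ ω = 1} := hδ (measurableSet_singleton 1)
  have hsetJ : MeasurableSet {ω | ε ω = 1} := hε (measurableSet_singleton 1)
  have hIm : Measurable (fun ω => if δ ω = 1 then (1:ℝ) else 0) :=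
    Measurable.ite hset1 measurable_const measurable_const
  have hJm : Measurable (fun ω => if ε ω = 1 then (1:ℝ) else 0) :=
    Measurable.ite hsetJ measurable_const measurable_const
  have hf1m : Measurable (fun ω => Real.exp (-‖X ω - Y ω‖^2 / 2)) := by fun_prop
  have hf2m : Measurable (fun ω => Real.exp (-‖X ω - X' ω‖^2 / 2)) := by fun_prop
  have hf3m : Measurable (fun ω => Real.exp (-‖Y ω - Y' ω‖^2 / 2)) := by fun_prop
  -- boundedness and integrability
  have hbint : ∀ (f : Ω → ℝ), Measurable f → (∀ ω, |f ω| ≤ 1) → Integrable f μ := by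
    intro f hf hb
    exact Integrable.mono' (integrable_const 1) hf.aestronglyMeasurable
      (ae_of_all _ (by simpa [Real.norm_eq_abs] using hb))
  have bI : ∀ ω, |(if δ ω = 1 then (1:ℝ) else 0)| ≤ 1 := by intro ω; split <;> norm_num
  have bJ : ∀ ω, |(if ε ω = 1 then (1:ℝ) else 0)| ≤ 1 := by intro ω; split <;> norm_num
  have bI' : ∀ ω, |1 - (if δ ω = 1 then (1:ℝ) else 0)| ≤ 1 := by intro ω; split <;> norm_num
  have bJ' : ∀ ω, |1 - (if ε ω = 1 then (1:ℝ) else 0)| ≤ 1 := by intro ω; split <;> norm_num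
  have intI : Integrable (fun ω => if δ ω = 1 then (1:ℝ) else 0) μ := hbint _ hIm bI
  have intJ : Integrable (fun ω => if ε ω = 1 then (1:ℝ) else 0) μ := hbint _ hJm bJ
  have intf1 : Integrable (fun ω => Real.exp (-‖X ω - Y ω‖^2 / 2)) μ :=
    hbint _ hf1m (fun ω => exp_bound _)
  have intf2 : Integrable (fun ω => Real.exp (-‖X ω - X' ω‖^2 / 2)) μ :=
    hbint _ hf2m (fun ω => exp_bound _)
  have intf3 : Integrable (fun ω => Real.exp (-‖Y ω - Y' ω‖^2 / 2)) μ :=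
    hbint _ hf3m (fun ω => exp_bound _)
  have intIf1 : Integrable (fun ω => (if δ ω = 1 then (1:ℝ) else 0)
      * Real.exp (-‖X ω - Y ω‖^2 / 2)) μ :=
    hbint _ (hIm.mul hf1m) (fun ω => abs_mul_le_one (bI ω) (exp_bound _))
  have intIJ : Integrable (fun ω => (if δ ω = 1 then (1:ℝ) else 0)
      * (if ε ω = 1 then (1:ℝ) else 0)) μ :=
    hbint _ (hIm.mul hJm) (fun ω => abs_mul_le_one (bI ω) (bJ ω))
  have intK2f2 : Integrable (fun ω => ((1 - (if δ ω = 1 then (1:ℝ) else 0))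
      * (if ε ω = 1 then (1:ℝ) else 0)) * Real.exp (-‖X ω - X' ω‖^2 / 2)) μ :=
    hbint _ (((measurable_const.sub hIm).mul hJm).mul hf2m)
      (fun ω => abs_mul_le_one (abs_mul_le_one (bI' ω) (bJ ω)) (exp_bound _))
  have intK3f3 : Integrable (fun ω => ((1 - (if δ ω = 1 then (1:ℝ) else 0))
      * (1 - (if ε ω = 1 then (1:ℝ) else 0))) * Real.exp (-‖Y ω - Y' ω‖^2 / 2)) μ :=
    hbint _ (((measurable_const.sub hIm).mul (measurable_const.sub hJm)).mul hf3m)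
      (fun ω => abs_mul_le_one (abs_mul_le_one (bI' ω) (bJ' ω)) (exp_bound _))
  have intOneSubI : Integrable (fun ω => 1 - (if δ ω = 1 then (1:ℝ) else 0)) μ :=
    (integrable_const 1).sub intI
  have intJsubIJ : Integrable (fun ω => (if ε ω = 1 then (1:ℝ) else 0)
      - (if δ ω = 1 then (1:ℝ) else 0) * (if ε ω = 1 then (1:ℝ) else 0)) μ := intJ.sub intIJ
  have intAux3 : Integrable (fun ω => (if δ ω = 1 then (1:ℝ) else 0)
      + ((if ε ω = 1 then (1:ℝ) else 0)
        - (if δ ω = 1 then (1:ℝ) else 0) * (if ε ω = 1 then (1:ℝ) else 0))) μ :=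
    intI.add intJsubIJ
  have intIplusK2 : Integrable (fun ω => (if δ ω = 1 then (1:ℝ) else 0)
      + ((1 - (if δ ω = 1 then (1:ℝ) else 0)) * (if ε ω = 1 then (1:ℝ) else 0))
        * Real.exp (-‖X ω - X' ω‖^2 / 2)) μ := intI.add intK2f2
  -- expectations of indicators
  have hEI : ∫ ω, (if δ ω = 1 then (1:ℝ) else 0) ∂μ = 1/2 := by
    have ind_eq : (fun ω => (if δ ω = 1 then (1:ℝ) else 0))
        = Set.indicator {ω | δ ω = 1} (fun _ => (1:ℝ)) := by
      funext ω; by_cases h : δ ω = 1 <;> simp [h]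
    rw [ind_eq, integral_indicator_const _ hset1, measureReal_def, hδ1]
    norm_num
  have hEJ : ∫ ω, (if ε ω = 1 then (1:ℝ) else 0) ∂μ = 1/2 := by
    have ind_eq : (fun ω => (if ε ω = 1 then (1:ℝ) else 0))
        = Set.indicator {ω | ε ω = 1} (fun _ => (1:ℝ)) := by
      funext ω; by_cases h : ε ω = 1 <;> simp [h]
    rw [ind_eq, integral_indicator_const _ hsetJ, measureReal_def, hε1]
    norm_num
  -- measurable maps for composition
  have φm : Measurable (fun t : ℝ => if t = 1 then (1:ℝ) else 0) :=
    Measurable.ite (measurableSet_eq) measurable_const measurable_const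
  have ψ1m : Measurable (fun q : H × H => Real.exp (-‖q.1 - q.2‖^2 / 2)) := by fun_prop
  have φ2m : Measurable (fun q : ℝ × ℝ =>
      (1 - (if q.2 = 1 then (1:ℝ) else 0)) * (if q.1 = 1 then (1:ℝ) else 0)) := by
    apply Measurable.mul
    · exact measurable_const.sub
        (Measurable.ite (measurable_snd (measurableSet_singleton 1))
          measurable_const measurable_const)
    · exact Measurable.ite (measurable_fst (measurableSet_singleton 1))
        measurable_const measurable_const
  have φ3m : Measurable (fun q : ℝ × ℝ =>
      (1 - (if q.2 = 1 then (1:ℝ) else 0)) * (1 - (if q.1 = 1 then (1:ℝ) else 0))) := by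
    apply Measurable.mul
    · exact measurable_const.sub
        (Measurable.ite (measurable_snd (measurableSet_singleton 1))
          measurable_const measurable_const)
    · exact measurable_const.sub
        (Measurable.ite (measurable_fst (measurableSet_singleton 1))
          measurable_const measurable_const)
  -- independent products of integrals
  have hindIf1 : IndepFun (fun ω => if δ ω = 1 then (1:ℝ) else 0)
      (fun ω => Real.exp (-‖X ω - Y ω‖^2 / 2)) μ :=
    (indA.comp ψ1m φm).symm
  have hmulIf1 : ∫ ω, (if δ ω = 1 then (1:ℝ) else 0) * Real.exp (-‖X ω - Y ω‖^2 / 2) ∂μ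
      = (1/2) * ∫ ω, Real.exp (-‖X ω - Y ω‖^2 / 2) ∂μ := by
    have h := hindIf1.integral_fun_mul_eq_mul_integral hIm.aestronglyMeasurable hf1m.aestronglyMeasurable
    calc ∫ ω, (if δ ω = 1 then (1:ℝ) else 0) * Real.exp (-‖X ω - Y ω‖^2 / 2) ∂μ
        = (∫ ω, (if δ ω = 1 then (1:ℝ) else 0) ∂μ)
          * ∫ ω, Real.exp (-‖X ω - Y ω‖^2 / 2) ∂μ := h
      _ = (1/2) * ∫ ω, Real.exp (-‖X ω - Y ω‖^2 / 2) ∂μ := by rw [hEI]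
  have hindIJ : IndepFun (fun ω => if δ ω = 1 then (1:ℝ) else 0)
      (fun ω => if ε ω = 1 then (1:ℝ) else 0) μ :=
    (indD.comp φm φm).symm
  have hEIJ : ∫ ω, (if δ ω = 1 then (1:ℝ) else 0) * (if ε ω = 1 then (1:ℝ) else 0) ∂μ
      = 1/4 := by
    have h := hindIJ.integral_fun_mul_eq_mul_integral hIm.aestronglyMeasurable hJm.aestronglyMeasurable
    calc ∫ ω, (if δ ω = 1 then (1:ℝ) else 0) * (if ε ω = 1 then (1:ℝ) else 0) ∂μ
        = (∫ ω, (if δ ω = 1 then (1:ℝ) else 0) ∂μ)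
          * ∫ ω, (if ε ω = 1 then (1:ℝ) else 0) ∂μ := h
      _ = 1/4 := by rw [hEI, hEJ]; norm_num
  have hK2 : ∫ ω, (1 - (if δ ω = 1 then (1:ℝ) else 0)) * (if ε ω = 1 then (1:ℝ) else 0) ∂μ
      = 1/4 := by
    have hr : ∀ ω, (1 - (if δ ω = 1 then (1:ℝ) else 0)) * (if ε ω = 1 then (1:ℝ) else 0)
        = (if ε ω = 1 then (1:ℝ) else 0)
          - (if δ ω = 1 then (1:ℝ) else 0) * (if ε ω = 1 then (1:ℝ) else 0) := by
      intro ω; ring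
    simp only [hr]
    rw [integral_sub intJ intIJ, hEJ, hEIJ]
    norm_num
  have hK3 : ∫ ω, (1 - (if δ ω = 1 then (1:ℝ) else 0))
      * (1 - (if ε ω = 1 then (1:ℝ) else 0)) ∂μ = 1/4 := by
    have hr : ∀ ω, (1 - (if δ ω = 1 then (1:ℝ) else 0)) * (1 - (if ε ω = 1 then (1:ℝ) else 0))
        = 1 - ((if δ ω = 1 then (1:ℝ) else 0) + ((if ε ω = 1 then (1:ℝ) else 0)
          - (if δ ω = 1 then (1:ℝ) else 0) * (if ε ω = 1 then (1:ℝ) else 0))) := by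
      intro ω; ring
    simp only [hr]
    rw [integral_sub (integrable_const 1) intAux3,
      integral_add intI intJsubIJ, integral_sub intJ intIJ, integral_const,
      hEI, hEJ, hEIJ]
    simp [measure_univ]
    norm_num
  have hindK2f2 : IndepFun
      (fun ω => (1 - (if δ ω = 1 then (1:ℝ) else 0)) * (if ε ω = 1 then (1:ℝ) else 0))
      (fun ω => Real.exp (-‖X ω - X' ω‖^2 / 2)) μ :=
    (indB.comp ψ1m φ2m).symm
  have hmulK2f2 : ∫ ω, ((1 - (if δ ω = 1 then (1:ℝ) else 0))
      * (if ε ω = 1 then (1:ℝ) else 0)) * Real.exp (-‖X ω - X' ω‖^2 / 2) ∂μ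
      = (1/4) * ∫ ω, Real.exp (-‖X ω - X' ω‖^2 / 2) ∂μ := by
    have h := hindK2f2.integral_fun_mul_eq_mul_integral ((measurable_const.sub hIm).mul hJm).aestronglyMeasurable
      hf2m.aestronglyMeasurable
    calc ∫ ω, ((1 - (if δ ω = 1 then (1:ℝ) else 0)) * (if ε ω = 1 then (1:ℝ) else 0))
          * Real.exp (-‖X ω - X' ω‖^2 / 2) ∂μ
        = (∫ ω, (1 - (if δ ω = 1 then (1:ℝ) else 0)) * (if ε ω = 1 then (1:ℝ) else 0) ∂μ)
          * ∫ ω, Real.exp (-‖X ω - X' ω‖^2 / 2) ∂μ := h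
      _ = (1/4) * ∫ ω, Real.exp (-‖X ω - X' ω‖^2 / 2) ∂μ := by rw [hK2]
  have hindK3f3 : IndepFun
      (fun ω => (1 - (if δ ω = 1 then (1:ℝ) else 0)) * (1 - (if ε ω = 1 then (1:ℝ) else 0)))
      (fun ω => Real.exp (-‖Y ω - Y' ω‖^2 / 2)) μ :=
    (indC.comp ψ1m φ3m).symm
  have hmulK3f3 : ∫ ω, ((1 - (if δ ω = 1 then (1:ℝ) else 0))
      * (1 - (if ε ω = 1 then (1:ℝ) else 0))) * Real.exp (-‖Y ω - Y' ω‖^2 / 2) ∂μ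
      = (1/4) * ∫ ω, Real.exp (-‖Y ω - Y' ω‖^2 / 2) ∂μ := by
    have h := hindK3f3.integral_fun_mul_eq_mul_integral
      ((measurable_const.sub hIm).mul (measurable_const.sub hJm)).aestronglyMeasurable
      hf3m.aestronglyMeasurable
    calc ∫ ω, ((1 - (if δ ω = 1 then (1:ℝ) else 0)) * (1 - (if ε ω = 1 then (1:ℝ) else 0)))
          * Real.exp (-‖Y ω - Y' ω‖^2 / 2) ∂μ
        = (∫ ω, (1 - (if δ ω = 1 then (1:ℝ) else 0))
            * (1 - (if ε ω = 1 then (1:ℝ) else 0)) ∂μ)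
          * ∫ ω, Real.exp (-‖Y ω - Y' ω‖^2 / 2) ∂μ := h
      _ = (1/4) * ∫ ω, Real.exp (-‖Y ω - Y' ω‖^2 / 2) ∂μ := by rw [hK3]
  -- pointwise identities
  have hpt1 : ∀ ω, gker (S ω) = (if δ ω = 1 then (1:ℝ) else 0)
      * Real.exp (-‖X ω - Y ω‖^2 / 2) + (1 - (if δ ω = 1 then (1:ℝ) else 0)) := by
    intro ω
    rcases hδval ω with h | h
    · have hs : S ω ≤ 0 := by
        rw [hS]
        rcases hεval ω with he | he <;> simp only [h, he] <;>
          nlinarith [norm_nonneg (X ω - X' ω), norm_nonneg (Y ω - Y' ω)]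
      rw [gker_of_nonpos hs, h]
      norm_num
    · have hs : S ω = ‖X ω - Y ω‖ := by rw [hS]; simp only [h]; ring
      rw [hs, gker_of_nonneg (norm_nonneg _), h]
      norm_num
  have hpt2 : ∀ ω, gker (-S ω) = (if δ ω = 1 then (1:ℝ) else 0)
      + ((1 - (if δ ω = 1 then (1:ℝ) else 0)) * (if ε ω = 1 then (1:ℝ) else 0))
        * Real.exp (-‖X ω - X' ω‖^2 / 2)
      + ((1 - (if δ ω = 1 then (1:ℝ) else 0)) * (1 - (if ε ω = 1 then (1:ℝ) else 0)))
        * Real.exp (-‖Y ω - Y' ω‖^2 / 2) := by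
    intro ω
    rcases hδval ω with h | h
    · rcases hεval ω with he | he
      · have hs : -S ω = ‖Y ω - Y' ω‖ := by rw [hS]; simp only [h, he]; ring
        rw [hs, gker_of_nonneg (norm_nonneg _), h, he]
        norm_num
      · have hs : -S ω = ‖X ω - X' ω‖ := by rw [hS]; simp only [h, he]; ring
        rw [hs, gker_of_nonneg (norm_nonneg _), h, he]
        norm_num
    · have hs : -S ω ≤ 0 := by
        rw [hS]
        rcases hεval ω with he | he <;> simp only [h, he] <;>
          nlinarith [norm_nonneg (X ω - Y ω)]
      rw [gker_of_nonpos hs, h]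
      norm_num
  -- compute both sides
  have hL : ∫ ω, gker (S ω) ∂μ
      = (1/2) * (∫ ω, Real.exp (-‖X ω - Y ω‖^2 / 2) ∂μ) + 1/2 := by
    simp only [hpt1]
    rw [integral_add intIf1 intOneSubI,
      integral_sub (integrable_const 1) intI, integral_const, hmulIf1, hEI]
    simp [measure_univ]
    norm_num
  have hR : ∫ ω, gker (-S ω) ∂μ
      = 1/2 + ((1/4) * (∫ ω, Real.exp (-‖X ω - X' ω‖^2 / 2) ∂μ)
        + (1/4) * ∫ ω, Real.exp (-‖Y ω - Y' ω‖^2 / 2) ∂μ) := by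
    simp only [hpt2]
    rw [integral_add intIplusK2 intK3f3, integral_add intI intK2f2,
      hEI, hmulK2f2, hmulK3f3]
    ring
  rw [hL, hR] at hgint
  linarith
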